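/- Let G : [0,1] × [0,1] → ℝ be nonnegative, with x ↦ G(x,t) nonincreasing on [0,1] for every fixed t ∈ [0,1], and with s ↦ s·G(0, 1 − s) concave on [0,1]. Let q : [0,1] → [0,1] be measurable with x ↦ q(x)·G(x, 1 − q(x)) integrable, and set r = ∫_0^1 q(x) dx. Then ∫_0^1 q(x)·G(x, 1 − q(x)) dx ≤ r·G(0, 1 − r). -/

import Mathlib

open MeasureTheory

/-- Supporting line for a concave function at an interior point of `[0,1]`. -/
lemma concave_support_line (f : ℝ → ℝ) (hf : ConcaveOn ℝ (Set.Icc (0:ℝ) 1) f)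
    {r : ℝ} (hr : r ∈ Set.Ioo (0:ℝ) 1) :
    ∃ c : ℝ, ∀ s ∈ Set.Icc (0:ℝ) 1, f s ≤ f r + c * (s - r) := by
  obtain ⟨hr0, hr1⟩ := hr
  have hrmem : r ∈ Set.Icc (0:ℝ) 1 := ⟨hr0.le, hr1.le⟩
  set S : Set ℝ := (fun s => (f s - f r) / (s - r)) '' Set.Ioc r 1 with hS
  have hne : S.Nonempty := ⟨_, ⟨1, ⟨hr1, le_refl 1⟩, rfl⟩⟩
  -- every left slope is an upper bound of right slopes
  have key : ∀ s' ∈ Set.Ico (0:ℝ) r, ∀ y ∈ S, y ≤ (f r - f s') / (r - s') := by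
    rintro s' ⟨hs'0, hs'r⟩ y ⟨s, ⟨hrs, hs1⟩, rfl⟩
    exact hf.slope_anti_adjacent ⟨hs'0, hs'r.le.trans hr1.le⟩ ⟨(hr0.trans hrs).le, hs1⟩ hs'r hrs
  have hbdd : BddAbove S := ⟨(f r - f 0) / (r - 0), key 0 ⟨le_refl 0, hr0⟩⟩
  refine ⟨sSup S, fun s hs => ?_⟩
  rcases lt_trichotomy s r with h | h | h
  · have hc : sSup S ≤ (f r - f s) / (r - s) := csSup_le hne (key s ⟨hs.1, h⟩)
    have hpos : 0 < r - s := by linarith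
    have h2 : sSup S * (r - s) ≤ f r - f s := (le_div_iff₀ hpos).mp hc
    have h3 : sSup S * (s - r) = -(sSup S * (r - s)) := by ring
    linarith
  · simp [h]
  · have hmem : (f s - f r) / (s - r) ∈ S := ⟨s, ⟨h, hs.2⟩, rfl⟩
    have hle : (f s - f r) / (s - r) ≤ sSup S := le_csSup hbdd hmem
    have hpos : 0 < s - r := by linarith
    have h2 : f s - f r ≤ sSup S * (s - r) := (div_le_iff₀ hpos).mp hle
    linarith

/-- If G(·,t) is nonnegative and nonincreasing in its first argument and
s ↦ s·G(0, 1−s) is concave on [0,1], then for any measurable q : [0,1] → [0,1] with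
r = ∫_0^1 q(x) dx, we have ∫_0^1 q(x)·G(x, 1−q(x)) dx ≤ r·G(0, 1−r). -/
theorem stmt_13 (G : ℝ → ℝ → ℝ)
    (hGnonneg : ∀ x ∈ Set.Icc (0:ℝ) 1, ∀ t ∈ Set.Icc (0:ℝ) 1, 0 ≤ G x t)
    (hGanti : ∀ t ∈ Set.Icc (0:ℝ) 1, AntitoneOn (fun x => G x t) (Set.Icc (0:ℝ) 1))
    (hGconc : ConcaveOn ℝ (Set.Icc (0:ℝ) 1) (fun s => s * G 0 (1 - s)))
    (q : ℝ → ℝ) (hq : Measurable q) (hqmem : ∀ x ∈ Set.Icc (0:ℝ) 1, q x ∈ Set.Icc (0:ℝ) 1)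
    (hint : IntegrableOn (fun x => q x * G x (1 - q x)) (Set.Icc (0:ℝ) 1))
    (r : ℝ) (hr : r = ∫ x in (0:ℝ)..1, q x) :
    ∫ x in (0:ℝ)..1, q x * G x (1 - q x) ≤ r * G 0 (1 - r) := by
  have h01 : (0:ℝ) ≤ 1 := zero_le_one
  rw [intervalIntegral.integral_of_le h01] at hr
  rw [intervalIntegral.integral_of_le h01]
  have hvol : (volume (Set.Ioc (0:ℝ) 1)).toReal = 1 := by
    simp [Real.volume_Ioc]
  have haemem : ∀ᵐ x ∂(volume.restrict (Set.Ioc (0:ℝ) 1)), x ∈ Set.Icc (0:ℝ) 1 := by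
    filter_upwards [ae_restrict_mem measurableSet_Ioc] with x hx
    exact Set.Ioc_subset_Icc_self hx
  have hqint : IntegrableOn q (Set.Ioc 0 1) := by
    refine Integrable.mono' (integrable_const 1) (hq.aestronglyMeasurable.restrict) ?_
    filter_upwards [haemem] with x hx
    have h := hqmem x hx
    rw [Real.norm_eq_abs, abs_of_nonneg h.1]; exact h.2
  have hintIoc : IntegrableOn (fun x => q x * G x (1 - q x)) (Set.Ioc 0 1) :=
    hint.mono_set Set.Ioc_subset_Icc_self
  have hr0 : 0 ≤ r := by
    rw [hr]
    refine setIntegral_nonneg measurableSet_Ioc fun x hx => (hqmem x (Set.Ioc_subset_Icc_self hx)).1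
  have hr1 : r ≤ 1 := by
    rw [hr]
    calc ∫ x in Set.Ioc (0:ℝ) 1, q x ≤ ∫ _x in Set.Ioc (0:ℝ) 1, (1:ℝ) := by
          refine integral_mono_ae hqint (integrable_const 1) ?_
          filter_upwards [haemem] with x hx using (hqmem x hx).2
      _ = 1 := by simp [hvol]
  rcases eq_or_lt_of_le hr0 with hre | hrpos
  · -- r = 0 : q = 0 a.e.
    have hq0 : (fun x => q x) =ᵐ[volume.restrict (Set.Ioc (0:ℝ) 1)] 0 := by
      rw [← integral_eq_zero_iff_of_nonneg_ae ?_ hqint]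
      · rw [← hr, ← hre]
      · filter_upwards [haemem] with x hx using (hqmem x hx).1
    have : ∫ x in Set.Ioc (0:ℝ) 1, q x * G x (1 - q x) = 0 := by
      rw [integral_eq_zero_iff_of_nonneg_ae ?_ hintIoc]
      · filter_upwards [hq0] with x hx
        simp [hx]
      · filter_upwards [hq0, haemem] with x hx hmem
        simp [hx]
    rw [this, ← hre]
    simp
  rcases eq_or_lt_of_le hr1 with hre | hrlt
  · -- r = 1 : q = 1 a.e.
    have hq1 : (fun x => 1 - q x) =ᵐ[volume.restrict (Set.Ioc (0:ℝ) 1)] 0 := by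
      have hint1 : IntegrableOn (fun x => 1 - q x) (Set.Ioc 0 1) :=
        (integrable_const 1).sub hqint
      rw [← integral_eq_zero_iff_of_nonneg_ae ?_ hint1]
      · rw [integral_sub (integrable_const 1) hqint, setIntegral_const, measureReal_def, hvol, smul_eq_mul,
          ← hr, hre]
        ring
      · filter_upwards [haemem] with x hx
        have := (hqmem x hx).2; simp; linarith
    calc ∫ x in Set.Ioc (0:ℝ) 1, q x * G x (1 - q x)
        ≤ ∫ _x in Set.Ioc (0:ℝ) 1, G 0 0 := by
          refine integral_mono_ae hintIoc (integrable_const _) ?_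
          filter_upwards [hq1, haemem] with x hx hmem
          have hq' : q x = 1 := by simp only [Pi.zero_apply] at hx; linarith
          rw [hq']
          simpa using hGanti 0 ⟨le_refl 0, h01⟩ ⟨le_refl 0, h01⟩ hmem hmem.1
      _ = G 0 0 := by rw [setIntegral_const, measureReal_def, hvol, one_smul]
      _ = r * G 0 (1 - r) := by rw [hre]; norm_num
  -- interior case
  obtain ⟨c, hc⟩ := concave_support_line _ hGconc ⟨hrpos, hrlt⟩
  have hptwise : ∀ᵐ x ∂(volume.restrict (Set.Ioc (0:ℝ) 1)),
      q x * G x (1 - q x) ≤ r * G 0 (1 - r) + c * (q x - r) := by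
    filter_upwards [haemem] with x hx
    have hqx := hqmem x hx
    have ht : 1 - q x ∈ Set.Icc (0:ℝ) 1 := ⟨by linarith [hqx.2], by linarith [hqx.1]⟩
    have h1 : G x (1 - q x) ≤ G 0 (1 - q x) :=
      hGanti _ ht ⟨le_refl 0, h01⟩ hx hx.1
    have h2 : q x * G x (1 - q x) ≤ q x * G 0 (1 - q x) :=
      mul_le_mul_of_nonneg_left h1 hqx.1
    exact h2.trans (hc (q x) hqx)
  have hintR : IntegrableOn (fun x => r * G 0 (1 - r) + c * (q x - r)) (Set.Ioc 0 1) :=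
    (integrable_const _).add ((hqint.sub (integrable_const r)).const_mul c)
  calc ∫ x in Set.Ioc (0:ℝ) 1, q x * G x (1 - q x)
      ≤ ∫ x in Set.Ioc (0:ℝ) 1, (r * G 0 (1 - r) + c * (q x - r)) :=
        integral_mono_ae hintIoc hintR hptwise
    _ = r * G 0 (1 - r) := by
        have h1 : Integrable (fun x => c * (q x - r)) (volume.restrict (Set.Ioc (0:ℝ) 1)) := by
          exact (hqint.sub (integrable_const r)).const_mul c
        rw [integral_add (integrable_const _) h1, setIntegral_const,
          MeasureTheory.integral_const_mul, integral_sub hqint (integrable_const r),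
          setIntegral_const, measureReal_def, hvol, smul_eq_mul, smul_eq_mul, ← hr]
        ring
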